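/- The steady-state mean BVP of the neurotransmitter model has at most one solution: if v₀, v₁ satisfy the ODE system and all four boundary conditions, then for every x ∈ [0, L] one has v₀(x) = (c·β/((α+β)·γ·sinh(γL)))·(cosh(γL) − cosh(γx)) and v₁(x) = (c·β/((α+β)·γ·sinh(γL)))·((β/α)·cosh(γL) + cosh(γx)). -/

import Mathlib

/-- Solutions of `p' = k p` on `[0, L]` are exponentials. -/
lemma ode_first_order_aux {L k : ℝ} (p : ℝ → ℝ)
    (hp : ∀ x ∈ Set.Icc (0:ℝ) L, HasDerivAt p (k * p x) x) :
    ∀ x ∈ Set.Icc (0:ℝ) L, p x = p 0 * Real.exp (k * x) := by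
  have hgd : ∀ x ∈ Set.Icc (0:ℝ) L,
      HasDerivAt (fun y => p y * Real.exp (-k * y)) 0 x := by
    intro x hx
    have h1 : HasDerivAt (fun y => Real.exp (-k * y)) (Real.exp (-k * x) * (-k * 1)) x :=
      ((hasDerivAt_id x).const_mul (-k)).exp
    have h2 := (hp x hx).mul h1
    refine h2.congr_deriv ?_
    ring
  have hgc : ∀ x ∈ Set.Icc (0:ℝ) L,
      p x * Real.exp (-k * x) = p 0 * Real.exp (-k * 0) := by
    intro x hx
    exact constant_of_has_deriv_right_zero
      (fun y hy => ((hgd y hy).continuousAt).continuousWithinAt)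
      (fun y hy => ((hgd y (Set.Ico_subset_Icc_self hy)).hasDerivWithinAt)) x hx
  intro x hx
  have h3 := hgc x hx
  simp only [mul_zero, Real.exp_zero, mul_one] at h3
  have h4 : p x = (p x * Real.exp (-k * x)) * Real.exp (k * x) := by
    rw [mul_assoc, ← Real.exp_add]
    simp
  rw [h4, h3]

/-- Functions with zero derivative on `[0, L]` are constant there. -/
lemma const_of_deriv_zero_aux {L : ℝ} (p : ℝ → ℝ)
    (hp : ∀ x ∈ Set.Icc (0:ℝ) L, HasDerivAt p 0 x) :
    ∀ x ∈ Set.Icc (0:ℝ) L, p x = p 0 :=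
  constant_of_has_deriv_right_zero
    (fun y hy => ((hp y hy).continuousAt).continuousWithinAt)
    (fun y hy => ((hp y (Set.Ico_subset_Icc_self hy)).hasDerivWithinAt))

/-- Uniqueness for the steady-state mean BVP of the neurotransmitter
model: any solution equals the explicit one. -/
theorem neurotransmitter_bvp_uniqueness
    (L D α β c γ : ℝ) (hL : 0 < L) (hD : 0 < D) (hα : 0 < α) (hβ : 0 < β) (hc : 0 < c)
    (hγ : γ = Real.sqrt ((α + β) / D))
    (v₀ v₁ : ℝ → ℝ) (a b : ℝ) (ha : a < 0) (hb : L < b)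
    (hreg0 : ContDiffOn ℝ 2 v₀ (Set.Ioo a b))
    (hreg1 : ContDiffOn ℝ 2 v₁ (Set.Ioo a b))
    (hode0 : ∀ x ∈ Set.Icc (0:ℝ) L, D * deriv (deriv v₀) x = β * v₀ x - α * v₁ x)
    (hode1 : ∀ x ∈ Set.Icc (0:ℝ) L, D * deriv (deriv v₁) x = α * v₁ x - β * v₀ x)
    (hbc0 : deriv v₀ 0 = 0) (hbc1 : deriv v₁ 0 = 0)
    (hbc2 : v₀ L = 0) (hbc3 : deriv v₁ L = c * β / (α + β)) :
    ∀ x ∈ Set.Icc (0:ℝ) L,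
      v₀ x = (c * β / ((α + β) * γ * Real.sinh (γ * L))) *
        (Real.cosh (γ * L) - Real.cosh (γ * x)) ∧
      v₁ x = (c * β / ((α + β) * γ * Real.sinh (γ * L))) *
        ((β / α) * Real.cosh (γ * L) + Real.cosh (γ * x)) := by
  have hopen : IsOpen (Set.Ioo a b) := isOpen_Ioo
  have hsub : Set.Icc (0:ℝ) L ⊆ Set.Ioo a b := fun x hx =>
    ⟨lt_of_lt_of_le ha hx.1, lt_of_le_of_lt hx.2 hb⟩
  have hD' : D ≠ 0 := ne_of_gt hD
  have hαβ : (0:ℝ) < α + β := by linarith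
  have hγpos : 0 < γ := by
    rw [hγ]; exact Real.sqrt_pos.mpr (div_pos hαβ hD)
  have hγ2 : γ ^ 2 = (α + β) / D := by
    rw [hγ]; exact Real.sq_sqrt (le_of_lt (div_pos hαβ hD))
  have hL0 : (0:ℝ) ∈ Set.Icc (0:ℝ) L := ⟨le_refl 0, le_of_lt hL⟩
  have hLL : L ∈ Set.Icc (0:ℝ) L := ⟨le_of_lt hL, le_refl L⟩
  -- derivative facts
  have hd0 : ∀ x ∈ Set.Icc (0:ℝ) L, HasDerivAt v₀ (deriv v₀ x) x := fun x hx =>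
    ((hreg0.differentiableOn (by norm_num)).differentiableAt
      (hopen.mem_nhds (hsub hx))).hasDerivAt
  have hd1 : ∀ x ∈ Set.Icc (0:ℝ) L, HasDerivAt v₁ (deriv v₁ x) x := fun x hx =>
    ((hreg1.differentiableOn (by norm_num)).differentiableAt
      (hopen.mem_nhds (hsub hx))).hasDerivAt
  have hdd0 : ∀ x ∈ Set.Icc (0:ℝ) L, HasDerivAt (deriv v₀) (deriv (deriv v₀) x) x := by
    intro x hx
    exact (((hreg0.deriv_of_isOpen (m := 1) hopen (by norm_num)).differentiableOn
      (by norm_num)).differentiableAt (hopen.mem_nhds (hsub hx))).hasDerivAt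
  have hdd1 : ∀ x ∈ Set.Icc (0:ℝ) L, HasDerivAt (deriv v₁) (deriv (deriv v₁) x) x := by
    intro x hx
    exact (((hreg1.deriv_of_isOpen (m := 1) hopen (by norm_num)).differentiableOn
      (by norm_num)).differentiableAt (hopen.mem_nhds (hsub hx))).hasDerivAt
  -- second derivative values
  have hv0'' : ∀ x ∈ Set.Icc (0:ℝ) L,
      deriv (deriv v₀) x = (β * v₀ x - α * v₁ x) / D := by
    intro x hx
    field_simp
    linarith [hode0 x hx]
  have hv1'' : ∀ x ∈ Set.Icc (0:ℝ) L,
      deriv (deriv v₁) x = (α * v₁ x - β * v₀ x) / D := by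
    intro x hx
    field_simp
    linarith [hode1 x hx]
  -- the combination u = α v₁ - β v₀ and its derivative u1
  set u : ℝ → ℝ := fun x => α * v₁ x - β * v₀ x with hu_def
  set u1 : ℝ → ℝ := fun x => α * deriv v₁ x - β * deriv v₀ x with hu1_def
  have hu : ∀ x ∈ Set.Icc (0:ℝ) L, HasDerivAt u (u1 x) x := fun x hx =>
    ((hd1 x hx).const_mul α).sub ((hd0 x hx).const_mul β)
  have hu1 : ∀ x ∈ Set.Icc (0:ℝ) L, HasDerivAt u1 (γ ^ 2 * u x) x := by
    intro x hx
    have h := ((hdd1 x hx).const_mul α).sub ((hdd0 x hx).const_mul β)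
    refine h.congr_deriv ?_
    rw [hv0'' x hx, hv1'' x hx, hγ2]
    simp only [hu_def]
    field_simp
    ring
  -- p = u1 + γ u, q = u1 - γ u
  set p : ℝ → ℝ := fun x => u1 x + γ * u x with hp_def
  set q : ℝ → ℝ := fun x => u1 x - γ * u x with hq_def
  have hp : ∀ x ∈ Set.Icc (0:ℝ) L, p x = p 0 * Real.exp (γ * x) := by
    apply ode_first_order_aux
    intro x hx
    have h := (hu1 x hx).add ((hu x hx).const_mul γ)
    refine h.congr_deriv ?_
    simp only [hp_def]
    ring
  have hq : ∀ x ∈ Set.Icc (0:ℝ) L, q x = q 0 * Real.exp (-γ * x) := by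
    apply ode_first_order_aux
    intro x hx
    have h := (hu1 x hx).sub ((hu x hx).const_mul γ)
    refine h.congr_deriv ?_
    simp only [hq_def]
    ring
  -- u1 0 = 0
  have hu10 : u1 0 = 0 := by simp [hu1_def, hbc0, hbc1]
  have hp0 : p 0 = γ * u 0 := by simp [hp_def, hu10]
  have hq0 : q 0 = -(γ * u 0) := by simp [hq_def, hu10]
  -- w1 = v₀' + v₁' is constant zero
  set w1 : ℝ → ℝ := fun x => deriv v₀ x + deriv v₁ x with hw1_def
  have hw1c : ∀ x ∈ Set.Icc (0:ℝ) L, w1 x = w1 0 := by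
    apply const_of_deriv_zero_aux
    intro x hx
    have h := (hdd0 x hx).add (hdd1 x hx)
    refine h.congr_deriv ?_
    rw [hv0'' x hx, hv1'' x hx]
    field_simp
    ring
  have hw10 : w1 0 = 0 := by simp [hw1_def, hbc0, hbc1]
  have hw1z : ∀ x ∈ Set.Icc (0:ℝ) L, w1 x = 0 := fun x hx => (hw1c x hx).trans hw10
  -- w = v₀ + v₁ is constant
  have hwc : ∀ x ∈ Set.Icc (0:ℝ) L, v₀ x + v₁ x = v₀ 0 + v₁ 0 := by
    apply const_of_deriv_zero_aux (fun x => v₀ x + v₁ x)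
    intro x hx
    have h := (hd0 x hx).add (hd1 x hx)
    rw [show deriv v₀ x + deriv v₁ x = w1 x from rfl, hw1z x hx] at h
    exact h
  -- value of u1 at L
  have hdv0L : deriv v₀ L = -(c * β / (α + β)) := by
    have := hw1z L hLL
    simp only [hw1_def] at this
    linarith [hbc3]
  have hu1L : u1 L = c * β := by
    simp only [hu1_def, hbc3, hdv0L]
    field_simp
    ring
  -- u x = u 0 * cosh (γ x)
  have hucosh : ∀ x ∈ Set.Icc (0:ℝ) L, u x = u 0 * Real.cosh (γ * x) := by
    intro x hx
    have hpx := hp x hx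
    have hqx := hq x hx
    rw [hp0] at hpx
    rw [hq0] at hqx
    simp only [hp_def, hq_def] at hpx hqx
    have hcosh : Real.cosh (γ * x) = (Real.exp (γ * x) + Real.exp (-(γ * x))) / 2 :=
      Real.cosh_eq _
    have hne : γ ≠ 0 := ne_of_gt hγpos
    have : 2 * γ * u x = γ * u 0 * (Real.exp (γ * x) + Real.exp (-γ * x)) := by
      linarith [hpx, hqx]
    have h3 : γ * (2 * u x) = γ * (u 0 * (Real.exp (γ * x) + Real.exp (-γ * x))) := by
      linear_combination this
    have h4 := mul_left_cancel₀ hne h3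
    have hneg : Real.exp (-(γ * x)) = Real.exp (-γ * x) := by ring_nf
    rw [hcosh, hneg]
    linear_combination h4 / 2
  -- u1 L relation gives u 0
  have hsinh : Real.sinh (γ * L) = (Real.exp (γ * L) - Real.exp (-(γ * L))) / 2 :=
    Real.sinh_eq _
  have hu1Lrel : γ * u 0 * Real.sinh (γ * L) = c * β := by
    have hpL := hp L hLL
    have hqL := hq L hLL
    rw [hp0] at hpL
    rw [hq0] at hqL
    simp only [hp_def, hq_def] at hpL hqL
    have h2 : 2 * u1 L = γ * u 0 * (Real.exp (γ * L) - Real.exp (-γ * L)) := by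
      linarith [hpL, hqL]
    rw [hu1L] at h2
    have hneg : Real.exp (-(γ * L)) = Real.exp (-γ * L) := by ring_nf
    rw [hsinh, hneg]
    linear_combination (-1/2 : ℝ) * h2
  have hsinhpos : 0 < Real.sinh (γ * L) := Real.sinh_pos_iff.mpr (mul_pos hγpos hL)
  -- v₁ L from u L
  have huL : u L = u 0 * Real.cosh (γ * L) := hucosh L hLL
  have hv1L : α * v₁ L = u 0 * Real.cosh (γ * L) := by
    have h : u L = α * v₁ L := by simp [hu_def, hbc2]
    linear_combination huL - h
  -- constant value of w
  have hwL : v₀ 0 + v₁ 0 = v₁ L := by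
    have := hwc L hLL
    rw [hbc2] at this
    linarith
  -- final computation
  intro x hx
  have hi : v₀ x + v₁ x = v₁ L := (hwc x hx).trans hwL
  have hii : α * v₁ x - β * v₀ x = u 0 * Real.cosh (γ * x) := by
    have := hucosh x hx
    simp only [hu_def] at this
    exact this
  have hne1 : α + β ≠ 0 := ne_of_gt hαβ
  have hne2 : γ ≠ 0 := ne_of_gt hγpos
  have hne3 : Real.sinh (γ * L) ≠ 0 := ne_of_gt hsinhpos
  have hne4 : α ≠ 0 := ne_of_gt hα
  have h1 : (α + β) * v₀ x = u 0 * (Real.cosh (γ * L) - Real.cosh (γ * x)) := by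
    linear_combination α * hi - hii + hv1L
  have h2 : α * (α + β) * v₁ x = β * (u 0 * Real.cosh (γ * L)) + α * (u 0 * Real.cosh (γ * x)) := by
    linear_combination α * β * hi + α * hii + β * hv1L
  have key0 : v₀ x * ((α + β) * γ * Real.sinh (γ * L)) =
      c * β * (Real.cosh (γ * L) - Real.cosh (γ * x)) := by
    linear_combination γ * Real.sinh (γ * L) * h1 +
      (Real.cosh (γ * L) - Real.cosh (γ * x)) * hu1Lrel
  have key1 : v₁ x * ((α + β) * γ * Real.sinh (γ * L) * α) =
      c * β * (β * Real.cosh (γ * L) + α * Real.cosh (γ * x)) := by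
    linear_combination γ * Real.sinh (γ * L) * h2 +
      (β * Real.cosh (γ * L) + α * Real.cosh (γ * x)) * hu1Lrel
  constructor
  · field_simp
    linear_combination key0
  · field_simp
    linear_combination key1
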